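/- Let G be a finite group admitting two nontrivial subgroups H₁, H₂ with trivial intersection H₁ ∩ H₂ = {1} (equivalently, G is not a nice group, i.e., G does not have a unique minimal nontrivial subgroup). Then there exist finite free G-posets P₁ and P₂ such that xind P₁ = xind P₂ = 1 but xind (P₁ × P₂) = 0; that is, there are G-maps P₁ → Q_1 G and P₂ → Q_1 G, there are no G-maps P₁ → Q_0 G or P₂ → Q_0 G, and there is a G-map P₁ × P₂ → Q_0 G. -/

import Mathlib

set_option linter.unusedSectionVars false

/-- `f : P → G × {0,…,n}` is a `G`-map to the `G`-poset `Q_n G`, whose order is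
`(g,i) ≤ (h,j)` iff `(g,i) = (h,j)` or `i < j`, and whose action is `g • (h,i) = (g h, i)`. -/
def IsGMapToQ (G : Type*) [Group G] {P : Type*} [PartialOrder P] [MulAction G P]
    (n : ℕ) (f : P → G × Fin (n + 1)) : Prop :=
  (∀ p q : P, p ≤ q → f p = f q ∨ (f p).2 < (f q).2) ∧
  ∀ (g : G) (p : P), f (g • p) = (g * (f p).1, (f p).2)

namespace Stmt2Aux

open Subgroup


variable {G : Type*} [Group G] [Finite G]

/-- nontrivial element of prime order in a given subgroup's zpowers -/
lemma orderOf_pow_div {g : G} {q : ℕ} (hdvd : q ∣ orderOf g) :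
    orderOf (g ^ (orderOf g / q)) = q := by
  have h0 : orderOf g ≠ 0 := (orderOf_pos g).ne'
  have hg : Nat.gcd (orderOf g) (orderOf g / q) = orderOf g / q :=
    Nat.gcd_eq_right (Nat.div_dvd_of_dvd hdvd)
  rw [orderOf_pow, hg, Nat.div_div_self hdvd h0]

lemma exists_prime_order_mem {H : Subgroup G} (h : H ≠ ⊥) :
    ∃ u, u ∈ H ∧ (orderOf u).Prime := by
  obtain ⟨x, hxH, hx1⟩ := H.bot_or_exists_ne_one.resolve_left h
  have h1 : orderOf x ≠ 1 := by simpa [orderOf_eq_one_iff] using hx1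
  obtain ⟨p, hp, hdvd⟩ := Nat.exists_prime_and_dvd h1
  refine ⟨x ^ (orderOf x / p), pow_mem hxH _, ?_⟩
  rw [orderOf_pow_div hdvd]
  exact hp

lemma zpowers_eq_of_mem {u w : G} (hp : (orderOf u).Prime) (hw : w ∈ zpowers u)
    (hw1 : w ≠ 1) : zpowers w = zpowers u := by
  have hle : zpowers w ≤ zpowers u := zpowers_le.mpr hw
  have hdvd : Nat.card (zpowers w) ∣ Nat.card (zpowers u) := card_dvd_of_le hle
  rw [Nat.card_zpowers, Nat.card_zpowers] at hdvd
  have : orderOf w = orderOf u := by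
    rcases (Nat.dvd_prime hp).mp hdvd with h | h
    · exact absurd (orderOf_eq_one_iff.mp h) hw1
    · exact h
  exact Subgroup.eq_of_le_of_card_ge hle (by rw [Nat.card_zpowers, Nat.card_zpowers, this])

lemma conj_zpowers (c x : G) :
    (zpowers x).map (MulAut.conj c).toMonoidHom = zpowers (c * x * c⁻¹) := by
  rw [MonoidHom.map_zpowers]
  simp

/-- the key group-theoretic lemma -/
lemma keyGroup (H₁ H₂ : Subgroup G) (h1 : H₁ ≠ ⊥) (h2 : H₂ ≠ ⊥) (h12 : H₁ ⊓ H₂ = ⊥) :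
    ∃ K₁ K₂ : Subgroup G, K₁ ≠ ⊥ ∧ K₂ ≠ ⊥ ∧
      ∀ (c t : G), t ∈ K₁ → c * t * c⁻¹ ∈ K₂ → t = 1 := by
  classical
  obtain ⟨u, huH, hpu⟩ := exists_prime_order_mem h1
  obtain ⟨v, hvH, hpv⟩ := exists_prime_order_mem h2
  have hu1 : u ≠ 1 := fun h => by rw [h, orderOf_one] at hpu; exact hpu.ne_one rfl
  have hv1 : v ≠ 1 := fun h => by rw [h, orderOf_one] at hpv; exact hpv.ne_one rfl
  -- generic step: from a non-conjugacy we conclude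
  have main : ∀ a b : G, (orderOf a).Prime → (orderOf b).Prime →
      (∀ c : G, zpowers (c * a * c⁻¹) ≠ zpowers b) →
      ∃ K₁ K₂ : Subgroup G, K₁ ≠ ⊥ ∧ K₂ ≠ ⊥ ∧
        ∀ (c t : G), t ∈ K₁ → c * t * c⁻¹ ∈ K₂ → t = 1 := by
    intro a b hpa hpb hnc
    have ha1 : a ≠ 1 := fun h => by rw [h, orderOf_one] at hpa; exact hpa.ne_one rfl
    have hb1 : b ≠ 1 := fun h => by rw [h, orderOf_one] at hpb; exact hpb.ne_one rfl
    refine ⟨zpowers a, zpowers b, by simpa using ha1, by simpa using hb1, ?_⟩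
    intro c t ht hct
    by_contra ht1
    have hza : zpowers t = zpowers a := zpowers_eq_of_mem hpa ht ht1
    have hct1 : c * t * c⁻¹ ≠ 1 := by
      intro h
      apply ht1
      have := congrArg (fun y => c⁻¹ * y * c) h
      simpa [mul_assoc] using this
    have hzb : zpowers (c * t * c⁻¹) = zpowers b := zpowers_eq_of_mem hpb hct hct1
    apply hnc c
    rw [← hzb, ← conj_zpowers, ← conj_zpowers, hza]
  -- zpowers u ≠ zpowers v
  have huv : zpowers u ≠ zpowers v := by
    intro h
    have : u ∈ H₁ ⊓ H₂ := ⟨huH, (zpowers_le.mpr hvH) (h ▸ mem_zpowers u)⟩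
    rw [h12, Subgroup.mem_bot] at this
    exact hu1 this
  by_cases hc : ∀ c : G, zpowers (c * u * c⁻¹) ≠ zpowers v
  · exact main u v hpu hpv hc
  push_neg at hc
  obtain ⟨c, hc⟩ := hc
  -- u and v have the same prime order p
  have horder : orderOf v = orderOf u := by
    have h1 : orderOf (c * u * c⁻¹) = orderOf u :=
      orderOf_injective (MulAut.conj c).toMonoidHom (MulAut.conj c).injective u
    rw [← Nat.card_zpowers, ← hc, Nat.card_zpowers, h1]
  set p := orderOf u with hpdef
  by_cases hz : ∃ z : G, (orderOf z).Prime ∧ orderOf z ≠ p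
  · -- a prime-order element of different order: zpowers never conjugate by card
    obtain ⟨z, hpz, hzp⟩ := hz
    refine main u z hpu hpz ?_
    intro d hd
    apply hzp
    have h1 : orderOf (d * u * d⁻¹) = orderOf u :=
      orderOf_injective (MulAut.conj d).toMonoidHom (MulAut.conj d).injective u
    rw [← Nat.card_zpowers, ← hd, Nat.card_zpowers, h1]
  · push_neg at hz
    -- all prime-order elements have order p ⇒ G is a p-group
    have hG : IsPGroup p G := by
      intro g
      have hg0 : orderOf g ≠ 0 := (orderOf_pos g).ne'
      refine ⟨(orderOf g).primeFactorsList.length, ?_⟩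
      rw [← Nat.eq_prime_pow_of_unique_prime_dvd hg0 ?_]
      · exact pow_orderOf_eq_one g
      · intro d hd hdvd
        have hwO : orderOf (g ^ (orderOf g / d)) = d := orderOf_pow_div hdvd
        have := hz (g ^ (orderOf g / d)) (by rw [hwO]; exact hd)
        rwa [hwO] at this
    have : Nontrivial G := ⟨u, 1, hu1⟩
    haveI hfp : Fact p.Prime := ⟨hpu⟩
    haveI := IsPGroup.center_nontrivial hG
    obtain ⟨z, hz1⟩ := exists_ne (1 : Subgroup.center G)
    -- refine z to prime order
    have hz0 : orderOf (z : G) ≠ 1 := by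
      rw [Ne, orderOf_eq_one_iff]; exact Subtype.coe_injective.ne hz1
    obtain ⟨q, hq, hqdvd⟩ := Nat.exists_prime_and_dvd hz0
    set w : G := (z : G) ^ (orderOf (z : G) / q) with hwdef
    have hwc : w ∈ Subgroup.center G := pow_mem z.2 _
    have hwo : orderOf w = q := orderOf_pow_div hqdvd
    have hwp : orderOf w = p := hz (w) (hwo ▸ hq)
    have hw1 : w ≠ 1 := by
      intro h
      rw [h, orderOf_one] at hwp
      exact hpu.ne_one hwp.symm
    -- u is not central (else zpowers u = zpowers v)
    have hucentral : u ∉ Subgroup.center G := by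
      intro hu
      apply huv
      have hcu : c * u * c⁻¹ = u := by
        rw [Subgroup.mem_center_iff.mp hu c]; group
      rw [← hc, hcu]
    refine main u w hpu (hwp ▸ hpu) ?_
    intro d hd
    -- from zpowers (d u d⁻¹) = zpowers w, get w ∈ zpowers(dud⁻¹), w central ⇒ u^k = d⁻¹wd = w
    have hwin : w ∈ zpowers (d * u * d⁻¹) := hd ▸ mem_zpowers w
    obtain ⟨k, hk⟩ := hwin
    have hk' : (d * u * d⁻¹) ^ k = d * u ^ k * d⁻¹ := by
      rw [← MulAut.conj_apply, ← map_zpow, MulAut.conj_apply]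
    have huk : u ^ k = w := by
      have h2 : d * u ^ k * d⁻¹ = w := hk' ▸ hk
      have h3 := (Subgroup.mem_center_iff.mp hwc) d
      -- w = d * u^k * d⁻¹ and w commutes with d ⇒ u^k = w
      have : u ^ k = d⁻¹ * w * d := by
        rw [← h2]; group
      rw [this, Subgroup.mem_center_iff.mp hwc d⁻¹]
      group
    -- so w ∈ zpowers u, hence zpowers w = zpowers u, and w central ⇒ u central, contradiction
    have hwzu : w ∈ zpowers u := huk ▸ zpow_mem (mem_zpowers u) k
    have := zpowers_eq_of_mem hpu hwzu hw1
    apply hucentral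
    have hu_in : u ∈ zpowers w := this ▸ mem_zpowers u
    obtain ⟨m, hm⟩ := hu_in
    exact hm ▸ zpow_mem hwc m



section Poset

variable {G : Type*} [Group G] {n : ℕ}

def pole (K : Subgroup G) (e : G ≃ Fin n) (p q : Fin n × Bool) : Prop :=
  p = q ∨ (p.2 = false ∧ q.2 = true ∧ (e.symm p.1)⁻¹ * e.symm q.1 ∈ K)

def PO (K : Subgroup G) (e : G ≃ Fin n) : PartialOrder (Fin n × Bool) where
  le := pole K e
  lt p q := pole K e p q ∧ ¬ pole K e q p
  lt_iff_le_not_ge _ _ := Iff.rfl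
  le_refl p := Or.inl rfl
  le_trans p q r hpq hqr := by
    rcases hpq with rfl | ⟨h1, h2, h3⟩
    · exact hqr
    · rcases hqr with rfl | ⟨h4, h5, h6⟩
      · exact Or.inr ⟨h1, h2, h3⟩
      · rw [h2] at h4; cases h4
  le_antisymm p q hpq hqp := by
    rcases hpq with rfl | ⟨h1, h2, h3⟩
    · rfl
    · rcases hqp with h | ⟨h4, h5, h6⟩
      · exact h.symm
      · rw [h2] at h4; cases h4

def psmul (e : G ≃ Fin n) (g : G) (p : Fin n × Bool) : Fin n × Bool :=
  (e (g * e.symm p.1), p.2)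

def MA (e : G ≃ Fin n) : MulAction G (Fin n × Bool) where
  smul := psmul e
  one_smul p := by show psmul e 1 p = p; simp [psmul]
  mul_smul g h p := by
    show psmul e (g * h) p = psmul e g (psmul e h p)
    simp [psmul, mul_assoc]

lemma po_compat (K : Subgroup G) (e : G ≃ Fin n) (g : G) (p q : Fin n × Bool)
    (h : pole K e p q) : pole K e (psmul e g p) (psmul e g q) := by
  rcases h with rfl | ⟨h1, h2, h3⟩
  · exact Or.inl rfl
  · refine Or.inr ⟨h1, h2, ?_⟩
    simpa [psmul, mul_assoc] using h3

lemma po_free (e : G ≃ Fin n) (g : G) (p : Fin n × Bool) (h : psmul e g p = p) :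
    g = 1 := by
  have h2 := congrArg (fun x => e.symm x.1) h
  simpa [psmul] using h2

lemma q1map (K : Subgroup G) (e : G ≃ Fin n) :
    ∃ f : (Fin n × Bool) → G × Fin 2,
      (∀ p q, pole K e p q → f p = f q ∨ (f p).2 < (f q).2) ∧
      (∀ g p, f (psmul e g p) = (g * (f p).1, (f p).2)) := by
  refine ⟨fun p => (e.symm p.1, if p.2 then 1 else 0), ?_, ?_⟩
  · intro p q h
    rcases h with rfl | ⟨h1, h2, h3⟩
    · exact Or.inl rfl
    · right
      simp only [h1, h2]
      decide
  · intro g p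
    simp [psmul]
    congr

lemma no_q0map (K : Subgroup G) (hK : K ≠ ⊥) (e : G ≃ Fin n)
    (f : (Fin n × Bool) → G × Fin 1)
    (hf1 : ∀ p q, pole K e p q → f p = f q ∨ (f p).2 < (f q).2)
    (hf2 : ∀ g p, f (psmul e g p) = (g * (f p).1, (f p).2)) : False := by
  apply hK
  rw [eq_bot_iff]
  intro k hk
  rw [Subgroup.mem_bot]
  have fin1 : ∀ p q : Fin n × Bool, pole K e p q → f p = f q := by
    intro p q h
    rcases hf1 p q h with h' | h'
    · exact h'
    · rw [Subsingleton.elim (f p).2 (f q).2] at h'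
      exact absurd h' (lt_irrefl _)
  have h1 : f (e 1, false) = f (e k, true) :=
    fin1 _ _ (Or.inr ⟨rfl, rfl, by simpa using hk⟩)
  have h2 : f (e k, false) = f (e k, true) :=
    fin1 _ _ (Or.inr ⟨rfl, rfl, by simpa using K.one_mem⟩)
  have h4 : psmul e k (e 1, false) = (e k, false) := by simp [psmul]
  have h5 := hf2 k (e 1, false)
  rw [h4, h2, ← h1] at h5
  have h6 := congrArg Prod.fst h5
  simpa using right_eq_mul.mp h6

variable (G) in
lemma exists_equivariant {X : Type*} [MulAction G X]
    (hfree : ∀ (g : G) (x : X), g • x = x → g = 1) :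
    ∃ φ : X → G, ∀ (g : G) (x : X), φ (g • x) = g * φ x := by
  classical
  letI s := MulAction.orbitRel G X
  set r : X → X := fun x => (Quotient.mk s x).out with hr
  have hrel : ∀ x : X, ∃ g : G, g • r x = x := by
    intro x
    have h : s ((Quotient.mk s x).out) x := Quotient.mk_out (s := s) x
    have h2 : s x ((Quotient.mk s x).out) := Setoid.symm h
    exact MulAction.mem_orbit_iff.mp (MulAction.orbitRel_apply.mp h2)
  choose σ hσ using hrel
  have hrg : ∀ (g : G) (x : X), r (g • x) = r x := by
    intro g x
    have hsr : s (g • x) x := MulAction.orbitRel_apply.mpr (MulAction.mem_orbit x g)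
    have h : Quotient.mk s (g • x) = Quotient.mk s x := Quotient.sound hsr
    simp only [hr, h]
  refine ⟨σ, fun g x => ?_⟩
  have h1 : σ (g • x) • r x = g • x := by rw [← hrg g x]; exact hσ (g • x)
  have h2 : (g * σ x) • r x = g • x := by rw [mul_smul, hσ]
  have h3 : ((g * σ x)⁻¹ * σ (g • x)) • r x = r x := by
    rw [mul_smul, h1, ← h2, inv_smul_smul]
  have h4 := hfree _ _ h3
  exact (inv_mul_eq_one.mp h4).symm

lemma free_pair (K₁ K₂ : Subgroup G)
    (hKK : ∀ (c t : G), t ∈ K₁ → c * t * c⁻¹ ∈ K₂ → t = 1) :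
    ∀ (g : G) (x : (G ⧸ K₁) × (G ⧸ K₂)), g • x = x → g = 1 := by
  intro g x hx
  obtain ⟨x1, x2⟩ := x
  induction x1 using QuotientGroup.induction_on with | H a =>
  induction x2 using QuotientGroup.induction_on with | H b =>
  rw [Prod.ext_iff] at hx
  obtain ⟨hxa, hxb⟩ := hx
  rw [Prod.smul_fst, MulAction.Quotient.smul_mk, smul_eq_mul, QuotientGroup.eq] at hxa
  rw [Prod.smul_snd, MulAction.Quotient.smul_mk, smul_eq_mul, QuotientGroup.eq] at hxb
  -- hxa : (g * a)⁻¹ * a ∈ K₁, hxb : (g * b)⁻¹ * b ∈ K₂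
  have ht1 : a⁻¹ * g⁻¹ * a ∈ K₁ := by
    have : (g * a)⁻¹ * a = a⁻¹ * g⁻¹ * a := by group
    rwa [this] at hxa
  have ht2 : (b⁻¹ * a) * (a⁻¹ * g⁻¹ * a) * (b⁻¹ * a)⁻¹ ∈ K₂ := by
    have : (b⁻¹ * a) * (a⁻¹ * g⁻¹ * a) * (b⁻¹ * a)⁻¹ = (g * b)⁻¹ * b := by group
    rw [this]; exact hxb
  have := hKK _ _ ht1 ht2
  have h5 : g⁻¹ = a * (a⁻¹ * g⁻¹ * a) * a⁻¹ := by group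
  rw [this, mul_one, mul_inv_cancel] at h5
  exact (by simpa using congrArg Inv.inv h5.symm : (1:G) = g).symm

end Poset

end Stmt2Aux

/-- If a finite group `G` has two nontrivial subgroups with trivial intersection
(equivalently, `G` is not a "nice" group), then there are finite free `G`-posets
`P₁, P₂` with `xind P₁ = xind P₂ = 1` but `xind (P₁ × P₂) = 0`. -/
theorem stmt2 {G : Type*} [Group G] [Finite G]
    (H₁ H₂ : Subgroup G) (h1 : H₁ ≠ ⊥) (h2 : H₂ ≠ ⊥) (h12 : H₁ ⊓ H₂ = ⊥) :
    ∃ (P₁ P₂ : Type) (_ : PartialOrder P₁) (_ : PartialOrder P₂)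
      (_ : MulAction G P₁) (_ : MulAction G P₂) (_ : Finite P₁) (_ : Finite P₂),
      (∀ (g : G) (p q : P₁), p ≤ q → g • p ≤ g • q) ∧
      (∀ (g : G) (p q : P₂), p ≤ q → g • p ≤ g • q) ∧
      (∀ (g : G) (p : P₁), g • p = p → g = 1) ∧
      (∀ (g : G) (p : P₂), g • p = p → g = 1) ∧
      (∃ f : P₁ → G × Fin 2, IsGMapToQ G 1 f) ∧
      (¬ ∃ f : P₁ → G × Fin 1, IsGMapToQ G 0 f) ∧
      (∃ f : P₂ → G × Fin 2, IsGMapToQ G 1 f) ∧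
      (¬ ∃ f : P₂ → G × Fin 1, IsGMapToQ G 0 f) ∧
      (∃ f : P₁ × P₂ → G × Fin 1, IsGMapToQ G 0 f) := by
  classical
  obtain ⟨K₁, K₂, hK1, hK2, hKK⟩ := Stmt2Aux.keyGroup H₁ H₂ h1 h2 h12
  obtain ⟨n, ⟨e⟩⟩ := Finite.exists_equiv_fin G
  refine ⟨Fin n × Bool, Fin n × Bool, Stmt2Aux.PO K₁ e, Stmt2Aux.PO K₂ e,
    Stmt2Aux.MA e, Stmt2Aux.MA e, inferInstance, inferInstance,
    fun g p q h => Stmt2Aux.po_compat K₁ e g p q h,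
    fun g p q h => Stmt2Aux.po_compat K₂ e g p q h,
    fun g p h => Stmt2Aux.po_free e g p h,
    fun g p h => Stmt2Aux.po_free e g p h,
    Stmt2Aux.q1map K₁ e,
    ?_, Stmt2Aux.q1map K₂ e, ?_, ?_⟩
  · rintro ⟨f, hf1, hf2⟩
    exact Stmt2Aux.no_q0map K₁ hK1 e f hf1 hf2
  · rintro ⟨f, hf1, hf2⟩
    exact Stmt2Aux.no_q0map K₂ hK2 e f hf1 hf2
  · obtain ⟨φ, hφ⟩ := Stmt2Aux.exists_equivariant G (Stmt2Aux.free_pair K₁ K₂ hKK)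
    refine ⟨fun x => (φ ((↑(e.symm x.1.1) : G ⧸ K₁), (↑(e.symm x.2.1) : G ⧸ K₂)), 0), ?_, ?_⟩
    · intro p q hpq
      left
      obtain ⟨ha, hb⟩ := hpq
      have hq1 : (↑(e.symm p.1.1) : G ⧸ K₁) = ↑(e.symm q.1.1) := by
        rcases ha with h | ⟨_, _, h3⟩
        · rw [h]
        · exact QuotientGroup.eq.mpr h3
      have hq2 : (↑(e.symm p.2.1) : G ⧸ K₂) = ↑(e.symm q.2.1) := by
        rcases hb with h | ⟨_, _, h3⟩
        · rw [h]
        · exact QuotientGroup.eq.mpr h3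
      show (φ ((↑(e.symm p.1.1) : G ⧸ K₁), (↑(e.symm p.2.1) : G ⧸ K₂)), (0 : Fin 1))
          = (φ ((↑(e.symm q.1.1) : G ⧸ K₁), (↑(e.symm q.2.1) : G ⧸ K₂)), (0 : Fin 1))
      rw [hq1, hq2]
    · intro g x
      show (φ ((↑(e.symm (Stmt2Aux.psmul e g x.1).1) : G ⧸ K₁),
              (↑(e.symm (Stmt2Aux.psmul e g x.2).1) : G ⧸ K₂)), (0 : Fin 1)) = _
      have e1 : e.symm (Stmt2Aux.psmul e g x.1).1 = g * e.symm x.1.1 := by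
        simp [Stmt2Aux.psmul]
      have e2 : e.symm (Stmt2Aux.psmul e g x.2).1 = g * e.symm x.2.1 := by
        simp [Stmt2Aux.psmul]
      rw [e1, e2]
      have h3 : ((↑(g * e.symm x.1.1) : G ⧸ K₁), (↑(g * e.symm x.2.1) : G ⧸ K₂))
          = g • ((↑(e.symm x.1.1) : G ⧸ K₁), (↑(e.symm x.2.1) : G ⧸ K₂)) := by
        rw [Prod.smul_mk, MulAction.Quotient.smul_mk, MulAction.Quotient.smul_mk,
          smul_eq_mul, smul_eq_mul]
      rw [h3, hφ]
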